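/- The number of treed permutations of size n equals n! times the n-th Catalan number c_n. -/

import Mathlib

/-- A `2`-permutation of its letter set: every letter of the word appears exactly twice. -/
def IsTwoPerm (w : List ℕ) : Prop := ∀ x ∈ w, w.count x = 2

/-- A treed permutation of size `n`: a word in which each letter `1, …, n` appears
exactly twice (so of length `2n`), such that the subword strictly between the two
occurrences of any letter is itself a `2`-permutation of its letter set. -/
def IsTreedPerm (n : ℕ) (w : List ℕ) : Prop :=
  w.length = 2 * n ∧ (∀ k ∈ Finset.Icc 1 n, w.count k = 2) ∧
    ∀ i l : Fin w.length, i < l → w.get i = w.get l →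
      IsTwoPerm ((w.drop ((i : ℕ) + 1)).take ((l : ℕ) - (i : ℕ) - 1))


/-- List-level version of the "between two equal letters" condition. -/
def Seg (w : List ℕ) : Prop :=
  ∀ (x : ℕ) (p q r : List ℕ), w = p ++ x :: (q ++ x :: r) → IsTwoPerm q

def Good (w : List ℕ) : Prop := IsTwoPerm w ∧ Seg w

lemma cancel_eq {x : ℕ} {u v u' v' : List ℕ} (h : u ++ x :: v = u' ++ x :: v')
    (hu : x ∉ u) (hu' : x ∉ u') : u = u' ∧ v = v' := by
  induction u generalizing u' with
  | nil =>
    cases u' with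
    | nil => simpa using h
    | cons b t =>
      simp only [List.nil_append, List.cons_append, List.cons.injEq] at h
      exact absurd (h.1 ▸ (List.mem_cons_self : b ∈ b :: t)) hu'
  | cons b t ih =>
    cases u' with
    | nil =>
      simp only [List.nil_append, List.cons_append, List.cons.injEq] at h
      exact absurd (h.1 ▸ (List.mem_cons_self : b ∈ b :: t)) hu
    | cons b' t' =>
      simp only [List.cons_append, List.cons.injEq] at h
      obtain ⟨rfl, h2⟩ := h
      have := ih h2 (fun hm => hu (List.mem_cons_of_mem _ hm))
        (fun hm => hu' (List.mem_cons_of_mem _ hm))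
      exact ⟨by rw [this.1], this.2⟩

lemma mem_split_first {x : ℕ} {u : List ℕ} (h : x ∈ u) :
    ∃ p s, u = p ++ x :: s ∧ x ∉ p := by
  induction u with
  | nil => simp at h
  | cons b t ih =>
    by_cases hb : x = b
    · exact ⟨[], t, by simp [hb], by simp⟩
    · rcases ih (by rcases List.mem_cons.1 h with h|h; exact absurd h hb; exact h) with
        ⟨p, s, rfl, hp⟩
      exact ⟨b :: p, s, by simp, by simp [List.mem_cons, hp, hb]⟩

lemma two_split {x : ℕ} {u : List ℕ} (hm : x ∈ u) (hc : u.count x = 2) :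
    ∃ p q r, u = p ++ x :: (q ++ x :: r) ∧ x ∉ p ∧ x ∉ q ∧ x ∉ r := by
  obtain ⟨p, s, rfl, hp⟩ := mem_split_first hm
  have hs : s.count x = 1 := by
    have := hc
    simp [List.count_append, List.count_cons, List.count_eq_zero.2 hp] at this
    omega
  have hms : x ∈ s := List.count_pos_iff.1 (by omega)
  obtain ⟨q, r, rfl, hq⟩ := mem_split_first hms
  have hr : x ∉ r := by
    rw [List.count_append, List.count_cons] at hs
    simp [List.count_eq_zero.2 hq] at hs
    exact List.count_eq_zero.1 hs
  exact ⟨p, q, r, rfl, hp, hq, hr⟩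

lemma split_notmem {x : ℕ} {w p q r : List ℕ} (hw : w = p ++ x :: (q ++ x :: r))
    (hc : w.count x = 2) : x ∉ p ∧ x ∉ q ∧ x ∉ r := by
  subst hw
  simp only [List.count_append, List.count_cons, beq_self_eq_true, if_true] at hc
  refine ⟨List.count_eq_zero.1 ?_, List.count_eq_zero.1 ?_, List.count_eq_zero.1 ?_⟩ <;> omega

lemma uniq_split {x : ℕ} {p q r p' q' r' : List ℕ}
    (h : p ++ x :: (q ++ x :: r) = p' ++ x :: (q' ++ x :: r'))
    (hp : x ∉ p) (hq : x ∉ q) (hp' : x ∉ p') (hq' : x ∉ q') :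
    p = p' ∧ q = q' ∧ r = r' := by
  obtain ⟨h1, h2⟩ := cancel_eq h hp hp'
  obtain ⟨h3, h4⟩ := cancel_eq h2 hq hq'
  exact ⟨h1, h3, h4⟩

lemma good_nil : Good [] := ⟨by simp [IsTwoPerm], by intro x p q r h; simp at h⟩

lemma good_glue {a : ℕ} {u v : List ℕ} (hau : a ∉ u) (hav : a ∉ v)
    (hdisj : ∀ x ∈ u, x ∉ v) (hu : Good u) (hv : Good v) :
    Good (a :: (u ++ a :: v)) := by
  have hcount : ∀ x ∈ a :: (u ++ a :: v), (a :: (u ++ a :: v)).count x = 2 := by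
    intro x hx
    rcases List.mem_cons.1 hx with rfl | hx
    · simp [List.count_append, List.count_cons, List.count_eq_zero.2 hau,
        List.count_eq_zero.2 hav]
    · rcases List.mem_append.1 hx with hx | hx
      · have hxa : x ≠ a := fun h => hau (h ▸ hx)
        simp [List.count_append, List.count_cons, hxa, Ne.symm hxa, hu.1 x hx,
          List.count_eq_zero.2 (hdisj x hx)]
      · rcases List.mem_cons.1 hx with rfl | hx
        · simp [List.count_append, List.count_cons, List.count_eq_zero.2 hau,
            List.count_eq_zero.2 hav]
        · have hxa : x ≠ a := fun h => hav (h ▸ hx)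
          have hxu : x ∉ u := fun h => hdisj x h hx
          simp [List.count_append, List.count_cons, hxa, Ne.symm hxa, hv.1 x hx,
            List.count_eq_zero.2 hxu]
  refine ⟨hcount, ?_⟩
  intro x p q r hw
  have hxmem : x ∈ a :: (u ++ a :: v) := by rw [hw]; simp
  have hc2 : (a :: (u ++ a :: v)).count x = 2 := hcount x hxmem
  obtain ⟨hxp, hxq, hxr⟩ := split_notmem hw hc2
  by_cases hxa : x = a
  · subst hxa
    -- canonical decomposition: [] ++ x :: (u ++ x :: v)
    have h' : ([] : List ℕ) ++ x :: (u ++ x :: v) = p ++ x :: (q ++ x :: r) := by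
      simpa using hw
    obtain ⟨-, hq, -⟩ := uniq_split h' (by simp) hau hxp hxq
    exact hq ▸ hu.1
  · rcases List.mem_cons.1 hxmem with h | h
    · exact absurd h hxa
    rcases List.mem_append.1 h with h | h
    · -- both occurrences in u
      obtain ⟨u1, u2, u3, rfl, h1, h2, h3⟩ := two_split h (hu.1 x h)
      have h' : (a :: u1) ++ x :: (u2 ++ x :: (u3 ++ a :: v)) = p ++ x :: (q ++ x :: r) := by
        rw [hw.symm]; simp
      obtain ⟨-, hq, -⟩ := uniq_split h' (by simp [hxa, h1]) h2 hxp hxq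
      exact hq ▸ hu.2 x u1 u2 u3 rfl
    · rcases List.mem_cons.1 h with h | h
      · exact absurd h hxa
      -- both occurrences in v
      obtain ⟨v1, v2, v3, rfl, h1, h2, h3⟩ := two_split h (hv.1 x h)
      have h' : (a :: (u ++ a :: v1)) ++ x :: (v2 ++ x :: v3) = p ++ x :: (q ++ x :: r) := by
        rw [hw.symm]; simp
      have hxu : x ∉ u := fun hh => hdisj x hh h
      obtain ⟨-, hq, -⟩ := uniq_split h' (by simp [hxa, hxu, h1]) h2 hxp hxq
      exact hq ▸ hv.2 x v1 v2 v3 rfl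

lemma good_decomp {a : ℕ} {w : List ℕ} (h : Good (a :: w)) :
    ∃ u v, w = u ++ a :: v ∧ a ∉ u ∧ a ∉ v ∧ (∀ x ∈ u, x ∉ v) ∧ Good u ∧ Good v := by
  have hca : (a :: w).count a = 2 := h.1 a (by simp)
  have hcw : w.count a = 1 := by simpa [List.count_cons] using hca
  have hma : a ∈ w := List.count_pos_iff.1 (by omega)
  obtain ⟨u, v, rfl, hau⟩ := mem_split_first hma
  have hav : a ∉ v := by
    rw [List.count_append, List.count_cons] at hcw
    simp [List.count_eq_zero.2 hau] at hcw
    exact List.count_eq_zero.1 hcw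
  have hu2 : IsTwoPerm u := h.2 a [] u v (by simp)
  have hcnt : ∀ x, (a :: (u ++ a :: v)).count x =
      u.count x + v.count x + (if x = a then 2 else 0) := by
    intro x
    by_cases hxa : x = a
    · subst hxa; simp [List.count_append, List.count_cons]; omega
    · simp [List.count_append, List.count_cons, hxa, Ne.symm hxa]
  have hvcount : ∀ x ∈ v, v.count x = 2 := by
    intro x hx
    have hxa : x ≠ a := fun hh => hav (hh ▸ hx)
    have htot : (a :: (u ++ a :: v)).count x = 2 := h.1 x (by simp [hx])
    rw [hcnt x] at htot
    simp [hxa] at htot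
    have hv1 : 1 ≤ v.count x := List.count_pos_iff.2 hx
    by_cases hxu : x ∈ u
    · have := hu2 x hxu; omega
    · have : u.count x = 0 := List.count_eq_zero.2 hxu; omega
  have hdisj : ∀ x ∈ u, x ∉ v := by
    intro x hxu hxv
    have h1 := hu2 x hxu
    have h2 := hvcount x hxv
    have hxa : x ≠ a := fun hh => hau (hh ▸ hxu)
    have htot : (a :: (u ++ a :: v)).count x = 2 := h.1 x (by simp [hxu])
    rw [hcnt x] at htot
    simp [hxa] at htot
    omega
  refine ⟨u, v, rfl, hau, hav, hdisj, ⟨hu2, ?_⟩, ⟨hvcount, ?_⟩⟩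
  · intro x p q r hu'
    exact h.2 x (a :: p) q (r ++ a :: v) (by rw [hu']; simp)
  · intro x p q r hv'
    exact h.2 x (a :: (u ++ a :: p)) q r (by rw [hv']; simp)

lemma getElem_split {p s : List ℕ} {x : ℕ} {n : ℕ} (hn : n = p.length) (h : n < (p ++ x :: s).length) :
    (p ++ x :: s)[n] = x := by
  subst hn
  rw [List.getElem_append_right (Nat.le_refl p.length)]
  simp

lemma fin_iff_seg (w : List ℕ) :
    (∀ i l : Fin w.length, i < l → w.get i = w.get l →
      IsTwoPerm ((w.drop ((i : ℕ) + 1)).take ((l : ℕ) - (i : ℕ) - 1))) ↔ Seg w := by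
  constructor
  · intro h x p q r hw
    have hlen : w.length = p.length + 1 + q.length + 1 + r.length := by
      rw [hw]; simp; omega
    have hi : p.length < w.length := by omega
    have hl : p.length + 1 + q.length < w.length := by omega
    have hgi : w.get ⟨p.length, hi⟩ = x := by
      rw [List.get_eq_getElem, List.getElem_of_eq hw, getElem_split rfl]
    have hgl : w.get ⟨p.length + 1 + q.length, hl⟩ = x := by
      have h2 : w = (p ++ x :: q) ++ x :: r := by rw [hw]; simp
      rw [List.get_eq_getElem, List.getElem_of_eq h2, getElem_split (by simp; omega)]
    have hseg := h ⟨p.length, hi⟩ ⟨p.length + 1 + q.length, hl⟩ (by simp; omega)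
      (by rw [hgi, hgl])
    have hdrop : w.drop (p.length + 1) = q ++ x :: r := by
      have h2 : w = (p ++ [x]) ++ (q ++ x :: r) := by rw [hw]; simp
      rw [h2, List.drop_left' (by simp)]
    have htake : (w.drop (p.length + 1)).take (p.length + 1 + q.length - p.length - 1) = q := by
      rw [hdrop]
      have : p.length + 1 + q.length - p.length - 1 = q.length := by omega
      rw [this, List.take_left]
    simpa [htake] using hseg
  · intro h i l hil hget
    have hiv : (i : ℕ) < w.length := i.2
    have hlv : (l : ℕ) < w.length := l.2
    have hli : ((i : ℕ) + 1) + ((l : ℕ) - (i : ℕ) - 1) = (l : ℕ) := by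
      have : (i : ℕ) < (l : ℕ) := hil
      omega
    have e2 : (w.drop ((i : ℕ) + 1)).drop ((l : ℕ) - (i : ℕ) - 1) =
        w.get i :: w.drop ((l : ℕ) + 1) := by
      rw [List.drop_drop, hli, List.drop_eq_getElem_cons hlv]
      rw [hget]
      simp
    have e1 : w.take (i : ℕ) ++ w.get i ::
        ((w.drop ((i : ℕ) + 1)).take ((l : ℕ) - (i : ℕ) - 1) ++
          (w.drop ((i : ℕ) + 1)).drop ((l : ℕ) - (i : ℕ) - 1)) = w := by
      rw [List.take_append_drop, List.get_eq_getElem, ← List.drop_eq_getElem_cons hiv,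
        List.take_append_drop]
    have hdec : w = w.take (i : ℕ) ++ w.get i ::
        ((w.drop ((i : ℕ) + 1)).take ((l : ℕ) - (i : ℕ) - 1) ++
          w.get i :: w.drop ((l : ℕ) + 1)) := by
      conv_lhs => rw [← e1]
      rw [e2]
    exact h (w.get i) _ _ _ hdec

open Tree in
/-- Euler-tour word of a labelled binary tree. -/
def toWord : Tree ℕ → List ℕ
  | BinaryTree.nil => []
  | BinaryTree.node a l r => a :: (toWord l ++ a :: toWord r)

open Tree in
/-- Preorder list of labels. -/
def lbl : Tree ℕ → List ℕ
  | BinaryTree.nil => []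
  | BinaryTree.node a l r => a :: (lbl l ++ lbl r)

lemma count_toWord (t : Tree ℕ) (x : ℕ) : (toWord t).count x = 2 * (lbl t).count x := by
  induction t with
  | nil => simp [toWord, lbl]
  | node a l r ihl ihr =>
    simp [toWord, lbl, List.count_append, List.count_cons, ihl, ihr]
    split <;> omega

lemma mem_toWord {t : Tree ℕ} {x : ℕ} : x ∈ toWord t ↔ x ∈ lbl t := by
  rw [← List.count_pos_iff, ← List.count_pos_iff, count_toWord]
  omega

lemma length_toWord (t : Tree ℕ) : (toWord t).length = 2 * (lbl t).length := by
  induction t with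
  | nil => simp [toWord, lbl]
  | node a l r ihl ihr => simp [toWord, lbl, ihl, ihr]; omega

lemma length_lbl (t : Tree ℕ) : (lbl t).length = t.numNodes := by
  induction t with
  | nil => simp [lbl]
  | node a l r ihl ihr => simp [lbl, ihl, ihr, BinaryTree.numNodes]

lemma good_toWord {t : Tree ℕ} (h : (lbl t).Nodup) : Good (toWord t) := by
  induction t with
  | nil => exact good_nil
  | node a l r ihl ihr =>
    rw [lbl, List.nodup_cons, List.nodup_append] at h
    obtain ⟨ha, hl, hr, hdisj⟩ := h
    have hal : a ∉ toWord l := fun hm => ha (by simp [mem_toWord.1 hm])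
    have har : a ∉ toWord r := fun hm => ha (by simp [mem_toWord.1 hm])
    have hd : ∀ x ∈ toWord l, x ∉ toWord r := fun x hx hx' =>
      hdisj _ (mem_toWord.1 hx) _ (mem_toWord.1 hx') rfl
    exact good_glue hal har hd (ihl hl) (ihr hr)

lemma toWord_nil_iff {t : Tree ℕ} : toWord t = [] ↔ t = BinaryTree.nil := by
  cases t <;> simp [toWord]

lemma toWord_inj {t₁ t₂ : Tree ℕ} (h₁ : (lbl t₁).Nodup) (h₂ : (lbl t₂).Nodup)
    (h : toWord t₁ = toWord t₂) : t₁ = t₂ := by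
  induction t₁ generalizing t₂ with
  | nil =>
    rw [toWord] at h
    exact (toWord_nil_iff.1 h.symm).symm
  | node a l r ihl ihr =>
    cases t₂ with
    | nil => simp [toWord] at h
    | node b l' r' =>
      rw [toWord, toWord] at h
      obtain ⟨rfl, h⟩ := List.cons.injEq _ _ _ _ ▸ h
      rw [lbl, List.nodup_cons, List.nodup_append] at h₁ h₂
      have hal : a ∉ toWord l := fun hm => h₁.1 (by simp [mem_toWord.1 hm])
      have hal' : a ∉ toWord l' := fun hm => h₂.1 (by simp [mem_toWord.1 hm])
      obtain ⟨hL, hR⟩ := cancel_eq h hal hal'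
      rw [ihl h₁.2.1 h₂.2.1 hL, ihr h₁.2.2.1 h₂.2.2.1 hR]

lemma exists_tree_aux (N : ℕ) : ∀ w : List ℕ, w.length ≤ N → Good w → ∃ t, toWord t = w := by
  induction N with
  | zero =>
    intro w hw _
    exact ⟨BinaryTree.nil, by rw [toWord, List.length_eq_zero_iff.1 (Nat.le_zero.1 hw)]⟩
  | succ N ih =>
    intro w hw hg
    cases w with
    | nil => exact ⟨BinaryTree.nil, rfl⟩
    | cons a w' =>
      obtain ⟨u, v, rfl, _, _, _, hu, hv⟩ := good_decomp hg
      simp only [List.length_cons, List.length_append] at hw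
      obtain ⟨tu, htu⟩ := ih u (by omega) hu
      obtain ⟨tv, htv⟩ := ih v (by omega) hv
      exact ⟨BinaryTree.node a tu tv, by rw [toWord, htu, htv]⟩

lemma exists_tree {w : List ℕ} (hg : Good w) : ∃ t, toWord t = w :=
  exists_tree_aux w.length w (le_refl _) hg

def shape (t : Tree ℕ) : Tree Unit := t.map (fun _ => ())

@[simp] lemma shape_nil : shape BinaryTree.nil = BinaryTree.nil := rfl
@[simp] lemma shape_node (a : ℕ) (l r : Tree ℕ) :
    shape (BinaryTree.node a l r) = BinaryTree.node () (shape l) (shape r) := rfl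

lemma numNodes_shape (t : Tree ℕ) : (shape t).numNodes = t.numNodes := by
  induction t with
  | nil => rfl
  | node a l r ihl ihr => simp only [Tree.numNodes, Tree.map, BinaryTree.numNodes, BinaryTree.map, shape] at *; omega

def labelTree : Tree Unit → List ℕ → Tree ℕ
  | BinaryTree.nil, _ => BinaryTree.nil
  | BinaryTree.node _ a b, L =>
      BinaryTree.node L.headI (labelTree a (L.tail.take a.numNodes))
        (labelTree b (L.tail.drop a.numNodes))

lemma labelTree_shape (t : Tree ℕ) : labelTree (shape t) (lbl t) = t := by
  induction t with
  | nil => rfl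
  | node a l r ihl ihr =>
    rw [shape_node, show lbl (BinaryTree.node a l r) = a :: (lbl l ++ lbl r) from rfl, labelTree]
    simp only [List.headI, List.tail_cons]
    rw [show BinaryTree.numNodes (shape l) = (lbl l).length from (numNodes_shape l).trans (length_lbl l).symm, List.take_left, List.drop_left, ihl, ihr]

lemma labelTree_spec : ∀ (s : Tree Unit) (L : List ℕ), L.length = s.numNodes →
    shape (labelTree s L) = s ∧ lbl (labelTree s L) = L := by
  intro s
  induction s with
  | nil =>
    intro L hL
    have : L = [] := List.length_eq_zero_iff.1 (by simpa [BinaryTree.numNodes] using hL)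
    subst this
    exact ⟨rfl, rfl⟩
  | node _ a b iha ihb =>
    intro L hL
    simp only [Tree.numNodes, BinaryTree.numNodes] at hL
    cases L with
    | nil => simp at hL
    | cons x L' =>
      have hlen : L'.length = a.numNodes + b.numNodes := by
        simp only [List.length_cons] at hL; omega
      have h1 : (L'.take a.numNodes).length = a.numNodes := by
        rw [List.length_take]; omega
      have h2 : (L'.drop a.numNodes).length = b.numNodes := by
        rw [List.length_drop]; omega
      obtain ⟨sa, la⟩ := iha _ h1
      obtain ⟨sb, lb⟩ := ihb _ h2
      rw [labelTree]
      simp only [List.headI, List.tail_cons]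
      constructor
      · rw [shape_node, sa, sb]
      · rw [show ∀ (y : ℕ) (p q : Tree ℕ), lbl (BinaryTree.node y p q) = y :: (lbl p ++ lbl q)
          from fun _ _ _ => rfl, la, lb, List.take_append_drop]

lemma letters_mem {n : ℕ} {w : List ℕ} (hc : ∀ k ∈ Finset.Icc 1 n, w.count k = 2)
    (hl : w.length = 2 * n) : ∀ x ∈ w, x ∈ Finset.Icc 1 n := by
  classical
  have hT : (2 • (Finset.Icc 1 n).val : Multiset ℕ) ≤ (w : Multiset ℕ) := by
    rw [Multiset.le_iff_count]
    intro x
    rw [Multiset.count_nsmul]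
    by_cases hx : x ∈ Finset.Icc 1 n
    · rw [Multiset.count_eq_one_of_mem (Finset.Icc 1 n).nodup hx]
      simpa [Multiset.coe_count] using (hc x hx).ge
    · simp [Multiset.count_eq_zero_of_notMem (s := (Finset.Icc 1 n).val) hx]
  have hcard : Multiset.card (w : Multiset ℕ) ≤ Multiset.card (2 • (Finset.Icc 1 n).val) := by
    simp [hl, Nat.card_Icc]
  have heq := Multiset.eq_of_le_of_card_le hT hcard
  intro x hx
  have : x ∈ (2 • (Finset.Icc 1 n).val : Multiset ℕ) := by
    rw [heq]; exact hx
  rcases Multiset.mem_nsmul.1 this with ⟨-, h⟩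
  exact h

lemma count_range'_eq (n x : ℕ) :
    (List.range' 1 n).count x = if x ∈ Finset.Icc 1 n then 1 else 0 := by
  by_cases h : x ∈ Finset.Icc 1 n
  · rw [if_pos h]
    refine List.count_eq_one_of_mem (List.nodup_range' (s := 1) (n := n)) ?_
    rw [List.mem_range'_1]
    rw [Finset.mem_Icc] at h
    omega
  · rw [if_neg h]
    refine List.count_eq_zero.2 ?_
    rw [List.mem_range'_1]
    rw [Finset.mem_Icc] at h
    omega

lemma nodup_of_perm_range' {n : ℕ} {t : Tree ℕ} (h : (lbl t).Perm (List.range' 1 n)) :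
    (lbl t).Nodup := h.nodup_iff.2 (List.nodup_range' (s := 1) (n := n))

lemma treed_toWord {n : ℕ} {t : Tree ℕ} (h : (lbl t).Perm (List.range' 1 n)) :
    IsTreedPerm n (toWord t) := by
  refine ⟨?_, ?_, ?_⟩
  · rw [length_toWord, h.length_eq, List.length_range']
  · intro k hk
    rw [count_toWord, h.count_eq, count_range'_eq, if_pos hk]
  · exact (fin_iff_seg _).2 (good_toWord (nodup_of_perm_range' h)).2

lemma good_of_treed {n : ℕ} {w : List ℕ} (h : IsTreedPerm n w) : Good w :=
  ⟨fun x hx => h.2.1 x (letters_mem h.2.1 h.1 x hx), (fin_iff_seg w).1 h.2.2⟩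

lemma perm_of_treed {n : ℕ} {t : Tree ℕ} (h : IsTreedPerm n (toWord t)) :
    (lbl t).Perm (List.range' 1 n) := by
  rw [List.perm_iff_count]
  intro x
  rw [count_range'_eq]
  by_cases hx : x ∈ Finset.Icc 1 n
  · rw [if_pos hx]
    have := h.2.1 x hx
    rw [count_toWord] at this
    omega
  · rw [if_neg hx]
    by_contra hne
    have hmem : x ∈ lbl t := List.count_pos_iff.1 (by omega)
    exact hx (letters_mem h.2.1 h.1 x (mem_toWord.2 hmem))

/-- The number of treed permutations of size `n` is `n!` times the `n`-th Catalan number. -/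
theorem card_treed_perms (n : ℕ) :
    Nat.card {w : List ℕ // IsTreedPerm n w} = n.factorial * catalan n := by
  classical
  have e1 : {t : Tree ℕ // (lbl t).Perm (List.range' 1 n)} ≃ {w : List ℕ // IsTreedPerm n w} := by
    refine Equiv.ofBijective (fun t => ⟨toWord t.1, treed_toWord t.2⟩) ⟨?_, ?_⟩
    · intro t₁ t₂ h
      exact Subtype.ext (toWord_inj (nodup_of_perm_range' t₁.2) (nodup_of_perm_range' t₂.2)
        (congrArg Subtype.val h))
    · intro ⟨w, hw⟩
      obtain ⟨t, rfl⟩ := exists_tree (good_of_treed hw)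
      exact ⟨⟨t, perm_of_treed hw⟩, rfl⟩
  have e2 : {t : Tree ℕ // (lbl t).Perm (List.range' 1 n)} ≃
      {s : Tree Unit // s.numNodes = n} × {l : List ℕ // l.Perm (List.range' 1 n)} := by
    refine ⟨fun t => (⟨shape t.1, ?_⟩, ⟨lbl t.1, t.2⟩), fun p => ⟨labelTree p.1.1 p.2.1, ?_⟩,
      ?_, ?_⟩
    · rw [numNodes_shape, ← length_lbl, t.2.length_eq, List.length_range']
    · have hlen : p.2.1.length = p.1.1.numNodes := by
        rw [p.2.2.length_eq, List.length_range', p.1.2]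
      rw [(labelTree_spec _ _ hlen).2]
      exact p.2.2
    · intro t
      exact Subtype.ext (labelTree_shape t.1)
    · intro p
      have hlen : p.2.1.length = p.1.1.numNodes := by
        rw [p.2.2.length_eq, List.length_range', p.1.2]
      obtain ⟨h1, h2⟩ := labelTree_spec p.1.1 p.2.1 hlen
      exact Prod.ext (Subtype.ext h1) (Subtype.ext h2)
  rw [← Nat.card_congr (e2.symm.trans e1), Nat.card_prod]
  have c1 : Nat.card {s : Tree Unit // s.numNodes = n} = catalan n := by
    rw [Nat.card_congr (Equiv.subtypeEquivRight
      (fun s => (BinaryTree.mem_treesOfNumNodesEq (x := s) (n := n)).symm))]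
    rw [Nat.card_eq_fintype_card, Fintype.card_coe, BinaryTree.treesOfNumNodesEq_card_eq_catalan]
  have c2 : Nat.card {l : List ℕ // l.Perm (List.range' 1 n)} = n.factorial := by
    have h : ∀ l : List ℕ, (l.Perm (List.range' 1 n)) ↔ l ∈ (List.range' 1 n).permutations.toFinset := by
      intro l
      rw [List.mem_toFinset, List.mem_permutations]
    rw [Nat.card_congr (Equiv.subtypeEquivRight h), Nat.card_eq_fintype_card, Fintype.card_coe,
      List.toFinset_card_of_nodup (List.nodup_permutations _ (List.nodup_range' (s := 1) (n := n))),
      List.length_permutations, List.length_range']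
  rw [c1, c2, Nat.mul_comm]
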